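/- There exists a constant C > 0 such that the following holds. Let G = (V,E) be a connected undirected graph on n ≥ 2 vertices, let ε ∈ (0,1], let k = 48·(log n)/ε², and let each edge e of G be assigned an independent weight p_e uniformly distributed on [0,1]. For a real p > 0, let G(p) denote the subgraph of G consisting of all edges of weight at most p. If k/(4·λ(G)) ≤ p ≤ k/(2·λ(G)), then with probability at least 1 − C/n⁴ the edge connectivity of G(p) satisfies λ(G(p)) ≤ k. -/

import Mathlib

open MeasureTheory
open scoped ENNReal

/-- The size of the edge cut `E_G(S, V∖S)`: the number of edges of `G` with one
endpoint in `S` and the other in `Sᶜ`. -/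
noncomputable def cutSize {V : Type*} (G : SimpleGraph V) (S : Set V) : ℕ :=
  {e ∈ G.edgeSet | ∃ u ∈ S, ∃ v ∈ Sᶜ, e = s(u, v)}.ncard

/-- The edge connectivity of `G`: the minimum of `λ(S,G)` over all nonempty proper
subsets `S ⊂ V`. -/
noncomputable def edgeConn {V : Type*} (G : SimpleGraph V) : ℕ :=
  sInf {c : ℕ | ∃ S : Set V, S.Nonempty ∧ Sᶜ.Nonempty ∧ cutSize G S = c}

/-- The product over all potential edges of the uniform probability measure on `[0,1]`:
the law of i.i.d. uniform labels `ω e ∈ [0,1]`, one per unordered pair of vertices.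
Thresholding these labels at `p` realizes the inclusion of each edge independently with
probability `p`. -/
noncomputable def edgeLabelMeasure (V : Type) [Fintype V] [DecidableEq V] :
    Measure (Sym2 V → ℝ) :=
  Measure.pi fun _ => volume.restrict (Set.Icc 0 1)

/-- The random subgraph `G(p)` of `G` determined by the labels `ω`: an edge `e` of `G`
is included exactly when `ω e ≤ p`, which happens with probability `p` independently
over the edges. -/
def sampledGraph {V : Type} (G : SimpleGraph V) (ω : Sym2 V → ℝ) (p : ℝ) :
    SimpleGraph V :=
  SimpleGraph.fromEdgeSet {e | e ∈ G.edgeSet ∧ ω e ≤ p}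

/-- Auxiliary: Fubini for `lintegral` of a product over a finite product measure,
`Fin n` version. -/
theorem lintegral_pi_fin_prod {n : ℕ} {E : Fin n → Type}
    [∀ i, MeasurableSpace (E i)] (μ : ∀ i, Measure (E i)) [∀ i, SigmaFinite (μ i)]
    (f : (i : Fin n) → E i → ℝ≥0∞) (hf : ∀ i, Measurable (f i)) :
    ∫⁻ (x : ∀ i, E i), ∏ i, f i (x i) ∂Measure.pi μ = ∏ i, ∫⁻ x, f i x ∂μ i := by
  induction n with
  | zero => simp
  | succ n n_ih =>
    have h := (measurePreserving_piFinSuccAbove μ 0).symm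
    rw [← h.lintegral_comp_emb (MeasurableEquiv.measurableEmbedding _)]
    simp_rw [MeasurableEquiv.piFinSuccAbove_symm_apply, Fin.insertNthEquiv,
      Fin.prod_univ_succ, Fin.insertNth_zero, Equiv.coe_fn_mk, Fin.cons_zero, Fin.cons_succ,
      Fin.zero_succAbove]
    change ∫⁻ a : E 0 × ((j : Fin n) → E j.succ), f 0 a.1 * ∏ x, f x.succ (a.2 x)
      ∂(μ 0).prod (Measure.pi fun j => μ j.succ) = _
    have hg : Measurable fun (y : ∀ j : Fin n, E (Fin.succ j)) => ∏ x : Fin n, f x.succ (y x) :=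
      Finset.measurable_prod _ fun i _ => (hf i.succ).comp (measurable_pi_apply i)
    rw [lintegral_prod_mul (hf 0).aemeasurable hg.aemeasurable,
      n_ih _ (fun i => f i.succ) (fun i => hf i.succ)]

/-- Auxiliary: Fubini for `lintegral` of a product over a finite product measure. -/
theorem lintegral_pi_prod {ι : Type} [Fintype ι] (ν : Measure ℝ) [SigmaFinite ν]
    (f : ι → ℝ → ℝ≥0∞) (hf : ∀ i, Measurable (f i)) :
    ∫⁻ (x : ι → ℝ), ∏ i, f i (x i) ∂Measure.pi (fun _ => ν) = ∏ i, ∫⁻ x, f i x ∂ν := by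
  let e := (Fintype.equivFin ι).symm
  have h := measurePreserving_piCongrLeft (fun _ : ι => ν) e
  rw [← h.lintegral_comp_emb (MeasurableEquiv.measurableEmbedding _)]
  simp_rw [← e.prod_comp, MeasurableEquiv.coe_piCongrLeft, Equiv.piCongrLeft_apply_apply]
  rw [lintegral_pi_fin_prod _ _ (fun j => hf (e j))]

/-- There is a constant `C > 0` such that for every connected graph `G` on `n ≥ 2`
vertices, every `ε ∈ (0,1]`, `k = 48·log n/ε²`, and every `p > 0` with
`k/(4·λ(G)) ≤ p ≤ k/(2·λ(G))`, with probability at least `1 - C/n⁴` the subgraph `G(p)`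
(consisting of the edges of weight at most `p` under i.i.d. uniform `[0,1]` edge
weights) has edge connectivity at most `k`. -/
theorem sampled_edgeConn_le :
    ∃ C : ℝ, 0 < C ∧
      ∀ (V : Type) [Fintype V] [DecidableEq V] (G : SimpleGraph V) (ε p : ℝ),
        2 ≤ Fintype.card V → G.Connected → 0 < ε → ε ≤ 1 → 0 < p →
        48 * Real.log (Fintype.card V) / ε ^ 2 / (4 * edgeConn G) ≤ p →
        p ≤ 48 * Real.log (Fintype.card V) / ε ^ 2 / (2 * edgeConn G) →
        1 - ENNReal.ofReal (C / (Fintype.card V : ℝ) ^ 4) ≤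
          edgeLabelMeasure V {ω : Sym2 V → ℝ |
            (edgeConn (sampledGraph G ω p) : ℝ) ≤ 48 * Real.log (Fintype.card V) / ε ^ 2} := by
  classical
  refine ⟨1, one_pos, ?_⟩
  intro V _ _ G ε p hn hconn hε hε1 hp _hp1 hp2
  set n : ℕ := Fintype.card V with hn'
  set L : ℝ := Real.log n with hL
  set k : ℝ := 48 * L / ε ^ 2 with hk
  have hn1 : (1:ℝ) < (n:ℝ) := by exact_mod_cast lt_of_lt_of_le one_lt_two hn
  have hn0 : (0:ℝ) < (n:ℝ) := lt_trans one_pos hn1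
  have hL0 : 0 < L := Real.log_pos hn1
  have hε2 : 0 < ε ^ 2 := by positivity
  have hk0 : 0 < k := by positivity
  have hkL : 48 * L ≤ k := by
    have hε21 : ε ^ 2 ≤ 1 := by nlinarith
    rw [hk, le_div_iff₀ hε2]
    nlinarith
  -- the edge connectivity of `G` is positive
  have hlam0 : edgeConn G ≠ 0 := by
    intro h
    rw [h] at hp2
    norm_num at hp2
    linarith
  have hlam : (0:ℝ) < (edgeConn G : ℝ) := by
    exact_mod_cast Nat.pos_of_ne_zero hlam0
  have hpk : p * (edgeConn G : ℝ) ≤ k / 2 := by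
    have := (le_div_iff₀ (by positivity : (0:ℝ) < 2 * (edgeConn G : ℝ))).mp hp2
    linarith
  -- a minimum cut `S`
  obtain ⟨v, w, hvw⟩ := Fintype.exists_pair_of_one_lt_card (by omega : 1 < Fintype.card V)
  have hmem : edgeConn G ∈ {c : ℕ | ∃ S : Set V, S.Nonempty ∧ Sᶜ.Nonempty ∧ cutSize G S = c} :=
    Nat.sInf_mem ⟨cutSize G {v}, {v}, ⟨v, rfl⟩, ⟨w, fun h => hvw (Set.mem_singleton_iff.mp h).symm⟩,
      rfl⟩
  obtain ⟨S, hS1, hS2, hScut⟩ := hmem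
  -- the cut edges of `S` in `G`, as a finset
  set cutSet : Set (Sym2 V) := {e ∈ G.edgeSet | ∃ u ∈ S, ∃ x ∈ Sᶜ, e = s(u, x)} with hcutSet
  set D : Finset (Sym2 V) := (Set.toFinite cutSet).toFinset with hD
  have hDcard : D.card = edgeConn G := by
    rw [← hScut, cutSize, Set.ncard_eq_toFinset_card _ (Set.toFinite cutSet)]
  -- the coordinate measure is a probability measure
  set ν : Measure ℝ := volume.restrict (Set.Icc 0 1) with hν
  haveI : IsProbabilityMeasure ν :=
    ⟨by rw [hν, Measure.restrict_apply_univ, Real.volume_Icc]; norm_num⟩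
  haveI : IsProbabilityMeasure (edgeLabelMeasure V) := by
    rw [edgeLabelMeasure]; infer_instance
  -- the weight function
  set f : Sym2 V → ℝ → ℝ≥0∞ := fun e x => if e ∈ D then (if x ≤ p then 2 else 1) else 1 with hf
  have hfm : ∀ e, Measurable (f e) := by
    intro e
    by_cases he : e ∈ D <;> simp only [hf, he, if_true, if_false]
    · exact Measurable.ite measurableSet_Iic measurable_const measurable_const
    · exact measurable_const
  set N : (Sym2 V → ℝ) → ℕ := fun ω => (D.filter fun e => ω e ≤ p).card with hN
  have hprod : ∀ ω : Sym2 V → ℝ, (∏ e, f e (ω e)) = 2 ^ N ω := by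
    intro ω
    calc (∏ e, f e (ω e))
        = ∏ e ∈ Finset.univ ∩ D, (if ω e ≤ p then (2:ℝ≥0∞) else 1) :=
          Finset.prod_ite_mem Finset.univ D _
      _ = ∏ e ∈ D, (if ω e ≤ p then (2:ℝ≥0∞) else 1) := by rw [Finset.univ_inter]
      _ = 2 ^ N ω := by
          rw [Finset.prod_ite, Finset.prod_const, Finset.prod_const, one_pow, mul_one]
  -- the integral bound (Chernoff numerator)
  have hI : ∫⁻ x, (if x ≤ p then (2:ℝ≥0∞) else 1) ∂ν ≤ ENNReal.ofReal (Real.exp p) := by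
    have heq : (fun x : ℝ => if x ≤ p then (2:ℝ≥0∞) else 1)
        = fun x => 1 + (Set.Iic p).indicator (fun _ => 1) x := by
      funext x
      by_cases h : x ≤ p <;> simp [h, Set.indicator, Set.mem_Iic, one_add_one_eq_two]
    rw [heq, lintegral_add_left measurable_const, lintegral_one, measure_univ,
      lintegral_indicator measurableSet_Iic]
    have h1 : ∫⁻ _ in Set.Iic p, (1:ℝ≥0∞) ∂ν = ν (Set.Iic p) := setLIntegral_one _
    rw [h1]
    have h2 : ν (Set.Iic p) ≤ ENNReal.ofReal p := by
      rw [hν, Measure.restrict_apply measurableSet_Iic]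
      have hsub : Set.Iic p ∩ Set.Icc 0 1 ⊆ Set.Icc 0 p := fun x hx =>
        Set.mem_Icc.mpr ⟨hx.2.1, hx.1⟩
      calc volume (Set.Iic p ∩ Set.Icc 0 1) ≤ volume (Set.Icc 0 p) := measure_mono hsub
        _ = ENNReal.ofReal p := by rw [Real.volume_Icc, sub_zero]
    calc 1 + ν (Set.Iic p) ≤ 1 + ENNReal.ofReal p := add_le_add_right h2 _
      _ = ENNReal.ofReal (1 + p) := by
          rw [ENNReal.ofReal_add one_pos.le hp.le, ENNReal.ofReal_one]
      _ ≤ ENNReal.ofReal (Real.exp p) := by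
          exact ENNReal.ofReal_le_ofReal (by linarith [Real.add_one_le_exp p])
  have hint : ∫⁻ ω, ∏ e, f e (ω e) ∂(edgeLabelMeasure V) ≤ ENNReal.ofReal (Real.exp (k / 2)) := by
    rw [edgeLabelMeasure, lintegral_pi_prod ν f hfm]
    have hfactor : ∀ e : Sym2 V,
        (∫⁻ x, f e x ∂ν) = if e ∈ D then ∫⁻ x, (if x ≤ p then (2:ℝ≥0∞) else 1) ∂ν else 1 := by
      intro e
      by_cases he : e ∈ D <;> simp only [hf, he, if_true, if_false]
      rw [lintegral_one, measure_univ]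
    calc (∏ e, ∫⁻ x, f e x ∂ν)
        = ∏ e ∈ Finset.univ ∩ D, ∫⁻ x, (if x ≤ p then (2:ℝ≥0∞) else 1) ∂ν := by
          simp_rw [hfactor]; exact Finset.prod_ite_mem Finset.univ D _
      _ = (∫⁻ x, (if x ≤ p then (2:ℝ≥0∞) else 1) ∂ν) ^ D.card := by
          rw [Finset.univ_inter, Finset.prod_const]
      _ ≤ ENNReal.ofReal (Real.exp p) ^ D.card := pow_le_pow_left₀ (by positivity) hI _
      _ = ENNReal.ofReal (Real.exp p ^ D.card) :=
          (ENNReal.ofReal_pow (Real.exp_nonneg p) _).symm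
      _ = ENNReal.ofReal (Real.exp (D.card * p)) := by rw [Real.exp_nat_mul]
      _ ≤ ENNReal.ofReal (Real.exp (k / 2)) := by
          refine ENNReal.ofReal_le_ofReal (Real.exp_le_exp.mpr ?_)
          rw [hDcard]
          linarith [hpk]
  -- Markov's inequality
  set Y : (Sym2 V → ℝ) → ℝ≥0∞ := fun ω => ∏ e, f e (ω e) with hY
  have hYm : AEMeasurable Y (edgeLabelMeasure V) :=
    (Finset.measurable_prod Finset.univ fun e _ =>
      (hfm e).comp (measurable_pi_apply e)).aemeasurable
  set c : ℝ≥0∞ := (2:ℝ≥0∞) ^ (k:ℝ) with hc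
  have hc0 : c ≠ 0 := by
    rw [hc]
    exact (ENNReal.rpow_pos (by norm_num) (by norm_num)).ne'
  have hcT : c ≠ ⊤ := by
    rw [hc]
    exact ENNReal.rpow_ne_top_of_nonneg hk0.le (by norm_num)
  have hBsub : {ω : Sym2 V → ℝ | ¬ ((edgeConn (sampledGraph G ω p) : ℝ) ≤ k)}
      ⊆ {ω | c ≤ Y ω} := by
    intro ω hω
    simp only [Set.mem_setOf_eq, not_le] at hω
    have h1 : edgeConn (sampledGraph G ω p) ≤ cutSize (sampledGraph G ω p) S :=
      Nat.sInf_le ⟨S, hS1, hS2, rfl⟩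
    have h2 : cutSize (sampledGraph G ω p) S ≤ N ω := by
      rw [cutSize]
      have hsub : {e ∈ (sampledGraph G ω p).edgeSet | ∃ u ∈ S, ∃ x ∈ Sᶜ, e = s(u, x)}
          ⊆ ↑(D.filter fun e => ω e ≤ p) := by
        intro e he
        obtain ⟨heE, hcross⟩ := he
        rw [sampledGraph, SimpleGraph.edgeSet_fromEdgeSet] at heE
        obtain ⟨⟨heG, hep⟩, -⟩ := heE
        simp only [Finset.coe_filter, Set.mem_setOf_eq]
        exact ⟨(Set.Finite.mem_toFinset _).mpr ⟨heG, hcross⟩, hep⟩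
      calc {e ∈ (sampledGraph G ω p).edgeSet | ∃ u ∈ S, ∃ x ∈ Sᶜ, e = s(u, x)}.ncard
          ≤ (↑(D.filter fun e => ω e ≤ p) : Set (Sym2 V)).ncard :=
            Set.ncard_le_ncard hsub (Set.toFinite _)
        _ = N ω := by rw [Set.ncard_coe_finset]
    have h3 : k < (N ω : ℝ) :=
      lt_of_lt_of_le hω (by exact_mod_cast h1.trans h2)
    show c ≤ Y ω
    calc c = (2:ℝ≥0∞) ^ (k:ℝ) := rfl
      _ ≤ (2:ℝ≥0∞) ^ ((N ω : ℝ)) :=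
          ENNReal.rpow_le_rpow_of_exponent_le one_le_two h3.le
      _ = (2:ℝ≥0∞) ^ (N ω) := ENNReal.rpow_natCast 2 (N ω)
      _ = Y ω := (hprod ω).symm
  have hmarkov : edgeLabelMeasure V {ω | c ≤ Y ω} ≤ ENNReal.ofReal (Real.exp (k / 2)) / c := by
    rw [ENNReal.le_div_iff_mul_le (Or.inl hc0) (Or.inl hcT)]
    calc edgeLabelMeasure V {ω | c ≤ Y ω} * c
        = c * edgeLabelMeasure V {ω | c ≤ Y ω} := mul_comm _ _
      _ ≤ ∫⁻ ω, Y ω ∂(edgeLabelMeasure V) := mul_meas_ge_le_lintegral₀ hYm c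
      _ ≤ ENNReal.ofReal (Real.exp (k / 2)) := hint
  -- the final numeric bound
  have hrp : (0:ℝ) < (2:ℝ) ^ (k:ℝ) := Real.rpow_pos_of_pos two_pos _
  have hfinal : ENNReal.ofReal (Real.exp (k / 2)) / c ≤ ENNReal.ofReal (1 / (n:ℝ) ^ 4) := by
    have hc' : c = ENNReal.ofReal ((2:ℝ) ^ (k:ℝ)) := by
      rw [hc, ← ENNReal.ofReal_rpow_of_pos two_pos, ENNReal.ofReal_ofNat]
    rw [hc', ← ENNReal.ofReal_div_of_pos hrp]
    refine ENNReal.ofReal_le_ofReal ?_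
    have h2k : (2:ℝ) ^ (k:ℝ) = Real.exp (Real.log 2 * k) := Real.rpow_def_of_pos two_pos _
    rw [h2k, ← Real.exp_sub]
    have hexp : Real.exp (k / 2 - Real.log 2 * k) ≤ Real.exp (-(4 * L)) := by
      refine Real.exp_le_exp.mpr ?_
      have hlog2 : (0.6931471803:ℝ) < Real.log 2 := Real.log_two_gt_d9
      have h1 : (1:ℝ)/12 ≤ Real.log 2 - 1/2 := by nlinarith
      have h2 : 48 * L * (Real.log 2 - 1/2) ≤ k * (Real.log 2 - 1/2) :=
        mul_le_mul_of_nonneg_right hkL (by linarith)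
      have h3 : 48 * L * (1/12) ≤ 48 * L * (Real.log 2 - 1/2) :=
        mul_le_mul_of_nonneg_left h1 (by positivity)
      nlinarith
    refine hexp.trans (le_of_eq ?_)
    have h4 : Real.exp (4 * L) = (n:ℝ) ^ 4 := by
      rw [hL, show (4:ℝ) * Real.log (n:ℝ) = ((4:ℕ):ℝ) * Real.log (n:ℝ) by norm_num,
        Real.exp_nat_mul, Real.exp_log hn0]
    rw [Real.exp_neg, h4, one_div]
  -- assemble
  have hbad : edgeLabelMeasure V {ω : Sym2 V → ℝ | ¬ ((edgeConn (sampledGraph G ω p) : ℝ) ≤ k)}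
      ≤ ENNReal.ofReal (1 / (n:ℝ) ^ 4) :=
    ((measure_mono hBsub).trans hmarkov).trans hfinal
  have hunion : (1:ℝ≥0∞) ≤
      edgeLabelMeasure V {ω : Sym2 V → ℝ | (edgeConn (sampledGraph G ω p) : ℝ) ≤ k}
        + ENNReal.ofReal (1 / (n:ℝ) ^ 4) := by
    calc (1:ℝ≥0∞) = edgeLabelMeasure V Set.univ := measure_univ.symm
      _ ≤ edgeLabelMeasure V
            ({ω : Sym2 V → ℝ | (edgeConn (sampledGraph G ω p) : ℝ) ≤ k}
              ∪ {ω : Sym2 V → ℝ | ¬ ((edgeConn (sampledGraph G ω p) : ℝ) ≤ k)}) := by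
          refine measure_mono fun ω _ => ?_
          by_cases h : (edgeConn (sampledGraph G ω p) : ℝ) ≤ k
          · exact Or.inl h
          · exact Or.inr h
      _ ≤ edgeLabelMeasure V {ω : Sym2 V → ℝ | (edgeConn (sampledGraph G ω p) : ℝ) ≤ k}
            + edgeLabelMeasure V
              {ω : Sym2 V → ℝ | ¬ ((edgeConn (sampledGraph G ω p) : ℝ) ≤ k)} :=
          measure_union_le _ _
      _ ≤ _ := add_le_add_right hbad _
  have hgoal := tsub_le_iff_right.mpr hunion
  simpa [one_div] using hgoal
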